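/- arXiv:math/0607191 — 3 statements merged into one kernel-verified Lean document; each statement's English description precedes it below -/
import Mathlib

section
/- Let K be a field of characteristic zero, let V₁, …, V_k be K-vector spaces with dim V_i = n_i + 1, let H ⊆ V₁ be a subspace of dimension h, let W = V₂ ⊗ ⋯ ⊗ V_k, and let π : V₁ ⊗ W → (V₁/H) ⊗ W be the quotient map tensored with the identity. Let v₁ ∈ V₁, …, v_k ∈ V_k be nonzero and let T_p ⊆ V₁ ⊗ ⋯ ⊗ V_k be the affine tangent space at p = v₁ ⊗ ⋯ ⊗ v_k. (1) If v₁ ∉ H, then dim(T_p ∩ (H ⊗ W)) = h and dim π(T_p) = 1 + (n₁ − h) + Σ_{i=2}^k n_i. (2) If v₁ ∈ H, then dim(T_p ∩ (H ⊗ W)) = h + Σ_{i=2}^k n_i and dim π(T_p) = n₁ + 1 − h. -/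
set_option maxHeartbeats 1000000
set_option synthInstance.maxHeartbeats 400000

open scoped TensorProduct
open Module

section helpers
variable {K : Type*} [Field K]

/-- A family with a dual family is linearly independent. -/
lemma li_of_dual' {M : Type*} [AddCommGroup M] [Module K M] {ι : Type*} [DecidableEq ι]
    (u : ι → M) (φ : ι → (M →ₗ[K] K))
    (hd : ∀ i j, φ i (u j) = if i = j then 1 else 0) : LinearIndependent K u := by
  rw [linearIndependent_iff']
  intro s g hsum i hi
  have h2 := congrArg (φ i) hsum
  simp only [map_sum, map_smul, hd, smul_eq_mul, mul_ite, mul_one, mul_zero, map_zero,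
    Finset.sum_ite_eq, hi, if_true] at h2
  exact h2

/-- A linearly independent family admits a dual family of functionals. -/
lemma exists_dual_family {M : Type*} [AddCommGroup M] [Module K M] {ι : Type*} [DecidableEq ι]
    {u : ι → M} (hu : LinearIndependent K u) :
    ∃ φ : ι → (M →ₗ[K] K), ∀ i j, φ i (u j) = if i = j then 1 else 0 := by
  obtain ⟨q, hq⟩ := Submodule.exists_isCompl (Submodule.span K (Set.range u))
  let b := Module.Basis.span hu
  refine ⟨fun i => (b.coord i) ∘ₗ (Submodule.projectionOnto _ q hq), fun i j => ?_⟩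
  have hmem : u j ∈ Submodule.span K (Set.range u) := Submodule.subset_span ⟨j, rfl⟩
  have h1 : (Submodule.projectionOnto _ q hq) (u j) = ⟨u j, hmem⟩ :=
    Submodule.projectionOnto_apply_left hq ⟨u j, hmem⟩
  have h2 : (⟨u j, hmem⟩ : Submodule.span K (Set.range u)) = b j :=
    (Basis.span_apply hu j).symm
  simp only [LinearMap.comp_apply, h1, h2, Basis.coord_apply, Basis.repr_self,
    Finsupp.single_apply]
  simp [eq_comm]

lemma sumExtend_apply_left' {M : Type*} [AddCommGroup M] [Module K M] {ι : Type*}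
    {u : ι → M} (hu : LinearIndependent K u) (j : ι) :
    (Basis.sumExtend hu) (Sum.inl j) = u j := by
  simp only [Basis.sumExtend, Basis.reindex_apply, Equiv.symm_symm, Basis.coe_extend]
  rfl

/-- A nonzero vector extends to a `Fin`-indexed basis with the vector in position `0`. -/
lemma exists_basis_zero_eq {M : Type*} [AddCommGroup M] [Module K M] [FiniteDimensional K M]
    {d : ℕ} (hd : Module.finrank K M = d + 1) {x : M} (hx : x ≠ 0) :
    ∃ b : Basis (Fin (d + 1)) K M, b 0 = x := by
  have li : LinearIndependent K (fun _ : Unit => x) := linearIndependent_unique_iff.mpr hx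
  let b0 := Basis.sumExtend li
  haveI : Fintype (Unit ⊕ Basis.sumExtendIndex li) := FiniteDimensional.fintypeBasisIndex b0
  have hcard : Fintype.card (Unit ⊕ Basis.sumExtendIndex li) = d + 1 := by
    rw [← Module.finrank_eq_card_basis b0, hd]
  let e := Fintype.equivFinOfCardEq hcard
  let e' := e.trans (Equiv.swap (e (Sum.inl ())) 0)
  refine ⟨b0.reindex e', ?_⟩
  have h0 : e'.symm 0 = Sum.inl () := by
    simp only [e', Equiv.symm_trans_apply, Equiv.symm_swap, Equiv.swap_apply_right]
    exact e.symm_apply_apply _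
  rw [Basis.reindex_apply, h0, sumExtend_apply_left']

lemma finrank_map_add_finrank_inf_ker' {M N : Type*} [AddCommGroup M] [Module K M]
    [AddCommGroup N] [Module K N] (f : M →ₗ[K] N) (p : Submodule K M)
    [FiniteDimensional K p] :
    Module.finrank K (p.map f) + Module.finrank K (p ⊓ LinearMap.ker f : Submodule K M) =
      Module.finrank K p := by
  have h1 := LinearMap.finrank_range_add_finrank_ker (f.comp p.subtype)
  rw [LinearMap.range_comp, Submodule.range_subtype, LinearMap.ker_comp] at h1
  rw [← h1]
  congr 1
  rw [← Submodule.map_comap_subtype]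
  exact (Submodule.equivMapOfInjective _ (Submodule.injective_subtype p) _).finrank_eq.symm

lemma card_le_finrank_of_li_of_mem {M : Type*} [AddCommGroup M] [Module K M]
    {ι : Type*} [Fintype ι] (g : ι → M) (P : Submodule K M) [FiniteDimensional K P]
    (hgli : LinearIndependent K g) (hgmem : ∀ j, g j ∈ P) :
    Fintype.card ι ≤ Module.finrank K P := by
  have hle : Submodule.span K (Set.range g) ≤ P :=
    Submodule.span_le.mpr (Set.range_subset_iff.mpr hgmem)
  calc Fintype.card ι = Module.finrank K (Submodule.span K (Set.range g)) :=
        (finrank_span_eq_card hgli).symm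
    _ ≤ Module.finrank K P := Submodule.finrank_mono hle

variable {m : ℕ} {n : Fin m → ℕ} {V : Fin m → Type*}
  [∀ i, AddCommGroup (V i)] [∀ i, Module K (V i)]

/-- The dual functional on a tensor product of basis vectors. -/
noncomputable def dualW (b : ∀ i, Basis (Fin (n i + 1)) K (V i)) (f : ∀ i, Fin (n i + 1)) :
    (⨂[K] i, V i) →ₗ[K] K :=
  PiTensorProduct.lift ((MultilinearMap.mkPiAlgebra K (Fin m) K).compLinearMap
    (fun i => (b i).coord (f i)))

lemma dualW_tprod (b : ∀ i, Basis (Fin (n i + 1)) K (V i)) (f g : ∀ i, Fin (n i + 1)) :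
    dualW b f (PiTensorProduct.tprod K (fun i => b i (g i))) = if f = g then 1 else 0 := by
  rw [dualW, PiTensorProduct.lift.tprod]
  simp only [MultilinearMap.compLinearMap_apply, MultilinearMap.mkPiAlgebra_apply,
    Basis.coord_apply, Basis.repr_self, Finsupp.single_apply]
  by_cases hfg : f = g
  · subst hfg; simp
  · rw [if_neg hfg]
    obtain ⟨i, hi⟩ := Function.ne_iff.mp hfg
    exact Finset.prod_eq_zero (Finset.mem_univ i) (if_neg (fun hc => hi hc.symm))

/-- Tensors of a "dualizable" family with basis-indexed pure tensors are linearly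
independent, for any injective assignment of indices. -/
lemma li_tmul_family {V' : Type*} [AddCommGroup V'] [Module K V'] {κ ι : Type*}
    [DecidableEq ι] [DecidableEq κ]
    (b : ∀ i, Basis (Fin (n i + 1)) K (V i))
    (u : κ → V') (φ : κ → (V' →ₗ[K] K))
    (hd : ∀ x y, φ x (u y) = if x = y then 1 else 0)
    (F : ι → κ × (∀ i, Fin (n i + 1))) (hF : Function.Injective F) :
    LinearIndependent K (fun j => u (F j).1 ⊗ₜ[K]
      (PiTensorProduct.tprod K (fun i => b i ((F j).2 i)) : ⨂[K] i, V i)) := by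
  refine li_of_dual' _ (fun j => (TensorProduct.lid K K).toLinearMap ∘ₗ
    TensorProduct.map (φ (F j).1) (dualW b (F j).2)) (fun j j' => ?_)
  simp only [LinearMap.comp_apply, TensorProduct.map_tmul, LinearEquiv.coe_coe,
    TensorProduct.lid_tmul, hd, dualW_tprod, smul_eq_mul]
  by_cases hjj : j = j'
  · subst hjj; simp
  · have hFne : F j ≠ F j' := fun hc => hjj (hF hc)
    rw [if_neg hjj]
    by_cases h1 : (F j).1 = (F j').1
    · have h2 : (F j).2 ≠ (F j').2 := fun hc => hFne (Prod.ext h1 hc)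
      simp [h1, h2]
    · simp [h1]

end helpers

/-- restriction lemma, primal form. Let `V₁` have dimension `n₁ + 1`,
let `H ⊆ V₁` have dimension `h`, let `V i` (`i : Fin m`) be the remaining factors with
`dim (V i) = n i + 1`, let `W = ⨂ᵢ V i` and let `π : V₁ ⊗ W → (V₁/H) ⊗ W` be the quotient
map tensored with the identity.  For nonzero `v₁ ∈ V₁` and `v i ∈ V i`, let `T_p` be the
affine tangent space at `p = v₁ ⊗ (⊗ᵢ v i)`.  If `v₁ ∉ H` then
`dim (T_p ∩ ker π) = h` and `dim π(T_p) = 1 + (n₁ - h) + Σᵢ n i`;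
if `v₁ ∈ H` then `dim (T_p ∩ ker π) = h + Σᵢ n i` and `dim π(T_p) = n₁ + 1 - h`.
(Here `H ⊗ W` is identified with its image in `V₁ ⊗ W`, i.e. with `ker π`.) -/
theorem segre_tangent_restriction
    (K : Type*) [Field K] [CharZero K] {m : ℕ}
    (n₁ h : ℕ) (n : Fin m → ℕ)
    (V₁ : Type*) [AddCommGroup V₁] [Module K V₁] [FiniteDimensional K V₁]
    (V : Fin m → Type*) [∀ i, AddCommGroup (V i)] [∀ i, Module K (V i)]
    [∀ i, FiniteDimensional K (V i)]
    (hdim₁ : Module.finrank K V₁ = n₁ + 1)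
    (hdim : ∀ i, Module.finrank K (V i) = n i + 1)
    (H : Submodule K V₁) (hH : Module.finrank K H = h)
    (v₁ : V₁) (hv₁ : v₁ ≠ 0) (v : ∀ i, V i) (hv : ∀ i, v i ≠ 0)
    (π : V₁ ⊗[K] (⨂[K] i, V i) →ₗ[K] (V₁ ⧸ H) ⊗[K] (⨂[K] i, V i))
    (hπ : π = TensorProduct.map H.mkQ LinearMap.id)
    (Tp : Submodule K (V₁ ⊗[K] (⨂[K] i, V i)))
    (hTp : Tp =
      LinearMap.range ((TensorProduct.mk K V₁ (⨂[K] i, V i)).flip (PiTensorProduct.tprod K v)) ⊔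
      ⨆ i : Fin m, LinearMap.range
        ((TensorProduct.mk K V₁ (⨂[K] i, V i) v₁) ∘ₗ (PiTensorProduct.tprod K).toLinearMap v i)) :
    (v₁ ∉ H →
      Module.finrank K (Tp ⊓ LinearMap.ker π : Submodule K (V₁ ⊗[K] (⨂[K] i, V i))) = h ∧
      Module.finrank K (Submodule.map π Tp) = 1 + (n₁ - h) + ∑ i, n i) ∧
    (v₁ ∈ H →
      Module.finrank K (Tp ⊓ LinearMap.ker π : Submodule K (V₁ ⊗[K] (⨂[K] i, V i)))
        = h + ∑ i, n i ∧
      Module.finrank K (Submodule.map π Tp) = n₁ + 1 - h) := by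
  classical
  -- bases adapted to the points
  have hbex : ∀ i, ∃ bi : Basis (Fin (n i + 1)) K (V i), bi 0 = v i :=
    fun i => exists_basis_zero_eq (hdim i) (hv i)
  choose b hb0 using hbex
  obtain ⟨e, he0⟩ := exists_basis_zero_eq hdim₁ hv₁
  let w : (∀ i, Fin (n i + 1)) → (⨂[K] i, V i) :=
    fun f => PiTensorProduct.tprod K (fun i => b i (f i))
  have hw0 : w 0 = PiTensorProduct.tprod K v := by
    unfold w; exact congrArg _ (funext fun i => hb0 i)
  have hwup : ∀ (i : Fin m) (c : Fin (n i + 1)),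
      (PiTensorProduct.tprod K (Function.update v i ((b i) c)) : ⨂[K] i, V i)
        = w (Function.update 0 i c) := by
    intro i c
    unfold w
    refine congrArg _ (funext fun j => ?_)
    by_cases hji : j = i
    · subst hji; simp
    · simp [Function.update_of_ne hji, hb0 j]
  -- membership lemmas
  have hmemR0 : ∀ x : V₁, x ⊗ₜ[K] w 0 ∈ Tp := by
    intro x
    rw [hTp]
    refine Submodule.mem_sup_left ⟨x, ?_⟩
    simp [hw0, TensorProduct.mk_apply]
  have hmemRi : ∀ (i : Fin m) (c : Fin (n i + 1)),
      v₁ ⊗ₜ[K] w (Function.update 0 i c) ∈ Tp := by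
    intro i c
    rw [hTp]
    refine Submodule.mem_sup_right (Submodule.mem_iSup_of_mem i ⟨b i c, ?_⟩)
    show v₁ ⊗ₜ[K] (PiTensorProduct.tprod K (Function.update v i ((b i) c))) = _
    rw [hwup]
  have hker : ∀ x ∈ H, ∀ y : (⨂[K] i, V i), x ⊗ₜ[K] y ∈ LinearMap.ker π := by
    intro x hx y
    rw [hπ, LinearMap.mem_ker, TensorProduct.map_tmul]
    rw [show H.mkQ x = 0 by simpa using (Submodule.Quotient.mk_eq_zero H).mpr hx]
    simp
  have himg : ∀ (x : V₁) (y : (⨂[K] i, V i)), x ⊗ₜ[K] y ∈ Tp → H.mkQ x ⊗ₜ[K] y ∈ Submodule.map π Tp := by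
    intro x y hx
    exact ⟨x ⊗ₜ[K] y, hx, by rw [hπ, TensorProduct.map_tmul]; rfl⟩
  -- description of Tp as a span
  let F : (Fin (n₁ + 1) ⊕ (Σ i : Fin m, Fin (n i))) →
      (Fin (n₁ + 1)) × (∀ i, Fin (n i + 1)) :=
    Sum.elim (fun a => (a, 0)) (fun p => (0, Function.update 0 p.1 p.2.succ))
  have hFinj : Function.Injective F := by
    rintro (a | ⟨i, c⟩) (a' | ⟨i', c'⟩) hEq
    · simpa [F, Prod.ext_iff] using hEq
    · exfalso
      have h2 := congrArg (fun p => p.2 i') hEq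
      simp [F] at h2
      exact (Fin.succ_ne_zero c').symm h2
    · exfalso
      have h2 := congrArg (fun p => p.2 i) hEq
      simp [F] at h2
    · simp only [F, Sum.elim_inr, Prod.mk.injEq] at hEq
      have h2 := hEq.2
      by_cases hii : i = i'
      · subst hii
        have := congrArg (fun g => g i) h2
        simp at this
        subst this; rfl
      · exfalso
        have := congrArg (fun g => g i) h2
        simp only [Function.update_self, Function.update_of_ne hii, Pi.zero_apply] at this
        exact Fin.succ_ne_zero c this
  have hcoorde : ∀ x y, e.coord x (e y) = if x = y then (1 : K) else 0 := by
    intro x y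
    simp [Basis.coord_apply, Basis.repr_self, Finsupp.single_apply, eq_comm]
  have hli : LinearIndependent K (fun j => e (F j).1 ⊗ₜ[K] w ((F j).2)) :=
    li_tmul_family b e e.coord hcoorde F hFinj
  have hTp' : Tp = Submodule.span K (Set.range (fun j => e (F j).1 ⊗ₜ[K] w ((F j).2))) := by
    rw [hTp]
    have hR0 : LinearMap.range
        ((TensorProduct.mk K V₁ (⨂[K] i, V i)).flip (PiTensorProduct.tprod K v)) =
        Submodule.span K (Set.range (fun a : Fin (n₁ + 1) => e a ⊗ₜ[K] w 0)) := by
      conv_lhs => rw [← Submodule.map_top, ← e.span_eq, Submodule.map_span, ← Set.range_comp]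
      refine congrArg _ (congrArg _ (funext fun a => ?_))
      simp [hw0, TensorProduct.mk_apply]
    have hRi : ∀ i : Fin m, LinearMap.range
        ((TensorProduct.mk K V₁ (⨂[K] i, V i) v₁) ∘ₗ (PiTensorProduct.tprod K).toLinearMap v i) =
        Submodule.span K (Set.range
          (fun c : Fin (n i + 1) => e 0 ⊗ₜ[K] w (Function.update 0 i c))) := by
      intro i
      conv_lhs => rw [← Submodule.map_top, ← (b i).span_eq, Submodule.map_span, ← Set.range_comp]
      refine congrArg _ (congrArg _ (funext fun c => ?_))
      show v₁ ⊗ₜ[K] (PiTensorProduct.tprod K (Function.update v i ((b i) c))) = _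
      rw [hwup, he0]
    rw [hR0]
    simp only [hRi]
    rw [← Submodule.span_iUnion, ← Submodule.span_union]
    refine le_antisymm (Submodule.span_le.mpr ?_) (Submodule.span_le.mpr ?_)
    · rintro x (⟨a, rfl⟩ | hx)
      · exact Submodule.subset_span ⟨Sum.inl a, rfl⟩
      · rw [Set.mem_iUnion] at hx
        obtain ⟨i, c, rfl⟩ := hx
        induction c using Fin.cases with
        | zero =>
          have h0 : Function.update (0 : ∀ j, Fin (n j + 1)) i 0 = 0 := by
            funext j
            by_cases hji : j = i
            · subst hji; simp
            · simp [Function.update_of_ne hji]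
          show e 0 ⊗ₜ[K] w (Function.update 0 i 0) ∈ _
          rw [h0]
          exact Submodule.subset_span ⟨Sum.inl 0, rfl⟩
        | succ c =>
          exact Submodule.subset_span ⟨Sum.inr ⟨i, c⟩, rfl⟩
    · rintro x ⟨(a | ⟨i, c⟩), rfl⟩
      · exact Submodule.subset_span (Or.inl ⟨a, rfl⟩)
      · exact Submodule.subset_span (Or.inr (Set.mem_iUnion.mpr ⟨i, ⟨c.succ, rfl⟩⟩))
  haveI hTpfd : FiniteDimensional K Tp := by
    rw [hTp']; exact FiniteDimensional.span_of_finite K (Set.finite_range _)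
  have hdimTp : Module.finrank K Tp = (n₁ + 1) + ∑ i, n i := by
    rw [hTp', finrank_span_eq_card hli]
    simp [Fintype.card_sigma]
  -- rank-nullity
  haveI : FiniteDimensional K (Tp ⊓ LinearMap.ker π : Submodule K (V₁ ⊗[K] (⨂[K] i, V i))) :=
    Submodule.finiteDimensional_of_le inf_le_left
  have hRN : Module.finrank K (Submodule.map π Tp) +
      Module.finrank K (Tp ⊓ LinearMap.ker π : Submodule K (V₁ ⊗[K] (⨂[K] i, V i))) =
      (n₁ + 1) + ∑ i, n i := by
    rw [finrank_map_add_finrank_inf_ker' π Tp, hdimTp]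
  -- quotient dimension
  have hqdim : Module.finrank K (V₁ ⧸ H) = (n₁ + 1) - h := by
    have := Submodule.finrank_quotient_add_finrank H
    rw [hdim₁, hH] at this
    omega
  have hcoordgen : ∀ {M' : Type _} [AddCommGroup M'] [Module K M'] {ι' : Type _}
      [DecidableEq ι'] (c : Basis ι' K M') (x y : ι'),
      c.coord x (c y) = if x = y then (1 : K) else 0 := by
    intro M' _ _ ι' _ c x y
    simp [Basis.coord_apply, Basis.repr_self, Finsupp.single_apply, eq_comm]
  constructor
  · -- case v₁ ∉ H
    intro hvH
    have hhn : h ≤ n₁ := by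
      have hlt : H < ⊤ := lt_of_le_of_ne le_top (fun hEq => hvH (hEq ▸ Submodule.mem_top))
      have := Submodule.finrank_lt (K := K) (V := V₁) hlt.ne
      rw [hH, hdim₁] at this
      omega
    -- lower bound on the kernel part: h
    have hA : h ≤ Module.finrank K (Tp ⊓ LinearMap.ker π : Submodule K (V₁ ⊗[K] (⨂[K] i, V i))) := by
      let cH : Basis (Fin h) K H := Module.finBasisOfFinrankEq K H hH
      have hu : LinearIndependent K (fun a => (cH a : V₁)) :=
        cH.linearIndependent.map' H.subtype (Submodule.ker_subtype H)
      obtain ⟨φ, hφ⟩ := exists_dual_family hu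
      have hgli := li_tmul_family b (fun a => (cH a : V₁)) φ hφ
        (fun a : Fin h => (a, (0 : ∀ i, Fin (n i + 1)))) (fun a a' hc => by
          simpa [Prod.ext_iff] using hc)
      have := card_le_finrank_of_li_of_mem _ (Tp ⊓ LinearMap.ker π) hgli (fun a => ?_)
      · simpa using this
      · exact Submodule.mem_inf.mpr ⟨hmemR0 _, hker _ (cH a).2 _⟩
    -- lower bound on the image part
    have hB : ((n₁ - h) + 1) + ∑ i, n i ≤ Module.finrank K (Submodule.map π Tp) := by
      have hqdim' : Module.finrank K (V₁ ⧸ H) = (n₁ - h) + 1 := by omega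
      have hmkQne : H.mkQ v₁ ≠ 0 := by
        simpa [Submodule.mkQ_apply, Submodule.Quotient.mk_eq_zero] using hvH
      obtain ⟨q, hq0⟩ := exists_basis_zero_eq hqdim' hmkQne
      let F' : (Fin ((n₁ - h) + 1) ⊕ (Σ i : Fin m, Fin (n i))) →
          (Fin ((n₁ - h) + 1)) × (∀ i, Fin (n i + 1)) :=
        Sum.elim (fun a => (a, 0)) (fun p => (0, Function.update 0 p.1 p.2.succ))
      have hF'inj : Function.Injective F' := by
        rintro (a | ⟨i, c⟩) (a' | ⟨i', c'⟩) hEq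
        · simpa [F', Prod.ext_iff] using hEq
        · exfalso
          have h2 := congrArg (fun p => p.2 i') hEq
          simp [F'] at h2
          exact (Fin.succ_ne_zero c').symm h2
        · exfalso
          have h2 := congrArg (fun p => p.2 i) hEq
          simp [F'] at h2
        · simp only [F', Sum.elim_inr, Prod.mk.injEq] at hEq
          have h2 := hEq.2
          by_cases hii : i = i'
          · subst hii
            have := congrArg (fun g => g i) h2
            simp at this
            subst this; rfl
          · exfalso
            have := congrArg (fun g => g i) h2
            simp only [Function.update_self, Function.update_of_ne hii, Pi.zero_apply] at this
            exact Fin.succ_ne_zero c this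
      have hgli : LinearIndependent K
          (fun j => q (F' j).1 ⊗ₜ[K] w ((F' j).2)) :=
        li_tmul_family b q q.coord (hcoordgen q) F' hF'inj
      have hmem : ∀ j, q (F' j).1 ⊗ₜ[K] w ((F' j).2) ∈ Submodule.map π Tp := by
        rintro (a | ⟨i, c⟩)
        · obtain ⟨x, hx⟩ := Submodule.mkQ_surjective H (q a)
          have := himg x (w 0) (hmemR0 x)
          rw [hx] at this
          exact this
        · have := himg v₁ (w (Function.update 0 i c.succ)) (hmemRi i c.succ)
          rw [show H.mkQ v₁ = q 0 from hq0.symm] at this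
          exact this
      have := card_le_finrank_of_li_of_mem _ (Submodule.map π Tp) hgli hmem
      simpa [Fintype.card_sigma] using this
    constructor
    · omega
    · omega
  · -- case v₁ ∈ H
    intro hvH
    have hh1 : 1 ≤ h := by
      have : Nontrivial H := nontrivial_of_ne ⟨v₁, hvH⟩ 0
        (fun hc => hv₁ (by simpa using congrArg Subtype.val hc))
      have := Module.finrank_pos (R := K) (M := H)
      omega
    have hhn1 : h ≤ n₁ + 1 := by
      have := Submodule.finrank_le H
      rw [hH, hdim₁] at this
      omega
    -- lower bound on kernel part : h + ∑ n i
    have hA : (h - 1 + 1) + ∑ i, n i ≤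
        Module.finrank K (Tp ⊓ LinearMap.ker π : Submodule K (V₁ ⊗[K] (⨂[K] i, V i))) := by
      have hH' : Module.finrank K H = (h - 1) + 1 := by omega
      have hx0 : (⟨v₁, hvH⟩ : H) ≠ 0 :=
        fun hc => hv₁ (by simpa using congrArg Subtype.val hc)
      obtain ⟨cH, hcH0⟩ := exists_basis_zero_eq hH' hx0
      have hu : LinearIndependent K (fun a => (cH a : V₁)) :=
        cH.linearIndependent.map' H.subtype (Submodule.ker_subtype H)
      obtain ⟨φ, hφ⟩ := exists_dual_family hu
      let F' : (Fin ((h - 1) + 1) ⊕ (Σ i : Fin m, Fin (n i))) →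
          (Fin ((h - 1) + 1)) × (∀ i, Fin (n i + 1)) :=
        Sum.elim (fun a => (a, 0)) (fun p => (0, Function.update 0 p.1 p.2.succ))
      have hF'inj : Function.Injective F' := by
        rintro (a | ⟨i, c⟩) (a' | ⟨i', c'⟩) hEq
        · simpa [F', Prod.ext_iff] using hEq
        · exfalso
          have h2 := congrArg (fun p => p.2 i') hEq
          simp [F'] at h2
          exact (Fin.succ_ne_zero c').symm h2
        · exfalso
          have h2 := congrArg (fun p => p.2 i) hEq
          simp [F'] at h2
        · simp only [F', Sum.elim_inr, Prod.mk.injEq] at hEq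
          have h2 := hEq.2
          by_cases hii : i = i'
          · subst hii
            have := congrArg (fun g => g i) h2
            simp at this
            subst this; rfl
          · exfalso
            have := congrArg (fun g => g i) h2
            simp only [Function.update_self, Function.update_of_ne hii, Pi.zero_apply] at this
            exact Fin.succ_ne_zero c this
      have hgli : LinearIndependent K
          (fun j => (cH (F' j).1 : V₁) ⊗ₜ[K] w ((F' j).2)) :=
        li_tmul_family b (fun a => (cH a : V₁)) φ hφ F' hF'inj
      have hcH0' : (cH 0 : V₁) = v₁ := by rw [hcH0]
      have hmem : ∀ j, (cH (F' j).1 : V₁) ⊗ₜ[K] w ((F' j).2) ∈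
          Tp ⊓ LinearMap.ker π := by
        rintro (a | ⟨i, c⟩)
        · exact Submodule.mem_inf.mpr ⟨hmemR0 _, hker _ (cH a).2 _⟩
        · show (cH 0 : V₁) ⊗ₜ[K] w (Function.update 0 i c.succ) ∈ _
          rw [hcH0']
          exact Submodule.mem_inf.mpr ⟨hmemRi i c.succ, hker _ hvH _⟩
      have := card_le_finrank_of_li_of_mem _ (Tp ⊓ LinearMap.ker π) hgli hmem
      simpa [Fintype.card_sigma] using this
    -- lower bound on image part : (n₁ + 1) - h
    have hB : (n₁ + 1) - h ≤ Module.finrank K (Submodule.map π Tp) := by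
      let q : Basis (Fin ((n₁ + 1) - h)) K (V₁ ⧸ H) :=
        Module.finBasisOfFinrankEq K _ hqdim
      have hgli : LinearIndependent K
          (fun a : Fin ((n₁ + 1) - h) => q a ⊗ₜ[K] w (0 : ∀ i, Fin (n i + 1))) :=
        li_tmul_family b q q.coord (hcoordgen q)
          (fun a => (a, 0)) (fun a a' hc => by simpa [Prod.ext_iff] using hc)
      have hmem : ∀ a : Fin ((n₁ + 1) - h),
          q a ⊗ₜ[K] w (0 : ∀ i, Fin (n i + 1)) ∈ Submodule.map π Tp := by
        intro a
        obtain ⟨x, hx⟩ := Submodule.mkQ_surjective H (q a)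
        have := himg x (w 0) (hmemR0 x)
        rw [hx] at this
        exact this
      have := card_le_finrank_of_li_of_mem _ (Submodule.map π Tp) hgli hmem
      simpa using this
    constructor
    · omega
    · omega
end

section
/- Let 1 ≤ n₁ ≤ ⋯ ≤ n_k be unbalanced, i.e. n_k − 1 ≥ Π_{i=1}^{k-1}(n_i + 1) − Σ_{i=1}^{k-1} n_i. Then the typical tensor rank satisfies R(n₁,…,n_k) = min{ n_k + 1, Π_{i=1}^{k-1}(n_i + 1) }; that is, the least s for which there exist s points p₁,…,p_s with Σ_{j=1}^s T_{p_j} = V₁ ⊗ ⋯ ⊗ V_k equals min{ n_k + 1, Π_{i=1}^{k-1}(n_i + 1) }. -/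
open scoped TensorProduct

/-- The subspace `G^i_p = v₁ ⊗ ⋯ ⊗ v_{i-1} ⊗ Vᵢ ⊗ v_{i+1} ⊗ ⋯ ⊗ v_k` of the tensor
space `⨂ᵢ K^{nᵢ+1}` attached to the point `p = v₁ ⊗ ⋯ ⊗ v_k`. -/
noncomputable def segreG (K : Type*) [Field K] {k : ℕ} (n : Fin k → ℕ)
    (v : ∀ i, Fin (n i + 1) → K) (i : Fin k) :
    Submodule K (⨂[K] i, (Fin (n i + 1) → K)) :=
  LinearMap.range ((PiTensorProduct.tprod K).toLinearMap v i)

/-- The affine tangent space `T_p = Σᵢ v₁ ⊗ ⋯ ⊗ Vᵢ ⊗ ⋯ ⊗ v_k` to the Segre variety at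
`p = v₁ ⊗ ⋯ ⊗ v_k`. -/
noncomputable def segreTangent (K : Type*) [Field K] {k : ℕ} (n : Fin k → ℕ)
    (v : ∀ i, Fin (n i + 1) → K) : Submodule K (⨂[K] i, (Fin (n i + 1) → K)) :=
  ⨆ i, segreG K n v i

/-- The statement `T(n₁,…,n_k; s; a₁,…,a_k)` of Abo–Ottaviani–Peterson holds:
there are points `p₁,…,p_s` and `q_{i,1},…,q_{i,aᵢ}` (pure tensors of nonzero vectors)
such that the span of the tangent spaces `T_{p_j}` together with the subspaces
`G^i_{q_{i,l}}` has the expected (maximal possible) dimension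
`min (s(1 + Σ nᵢ) + Σ aᵢ(nᵢ+1)) (Π (nᵢ+1))`. -/
def THolds (K : Type*) [Field K] {k : ℕ} (n : Fin k → ℕ) (s : ℕ) (a : Fin k → ℕ) : Prop :=
  ∃ (p : Fin s → ∀ i, Fin (n i + 1) → K)
    (q : ∀ i : Fin k, Fin (a i) → ∀ j, Fin (n j + 1) → K),
    (∀ j i, p j i ≠ 0) ∧ (∀ i l j, q i l j ≠ 0) ∧
    Module.finrank K
      (((⨆ j, segreTangent K n (p j)) ⊔ (⨆ i, ⨆ l, segreG K n (q i l) i))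
        : Submodule K (⨂[K] i, (Fin (n i + 1) → K)))
      = min (s * (1 + ∑ i, n i) + ∑ i, a i * (n i + 1)) (∏ i, (n i + 1))

/-- The statement `T(n₁,…,n_k; s; a₁,…,a_k)` fails: every choice of points gives a span
of dimension strictly smaller than the expected dimension. -/
def TFails (K : Type*) [Field K] {k : ℕ} (n : Fin k → ℕ) (s : ℕ) (a : Fin k → ℕ) : Prop :=
  ∀ (p : Fin s → ∀ i, Fin (n i + 1) → K)
    (q : ∀ i : Fin k, Fin (a i) → ∀ j, Fin (n j + 1) → K),
    (∀ j i, p j i ≠ 0) → (∀ i l j, q i l j ≠ 0) →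
    Module.finrank K
      (((⨆ j, segreTangent K n (p j)) ⊔ (⨆ i, ⨆ l, segreG K n (q i l) i))
        : Submodule K (⨂[K] i, (Fin (n i + 1) → K)))
      < min (s * (1 + ∑ i, n i) + ∑ i, a i * (n i + 1)) (∏ i, (n i + 1))

/-- The tuple `(n; s; a)` is subabundant. -/
def Subabundant {k : ℕ} (n : Fin k → ℕ) (s : ℕ) (a : Fin k → ℕ) : Prop :=
  s * (1 + ∑ i, n i) + ∑ i, a i * (n i + 1) ≤ ∏ i, (n i + 1)

/-- The tuple `(n; s; a)` is superabundant. -/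
def Superabundant {k : ℕ} (n : Fin k → ℕ) (s : ℕ) (a : Fin k → ℕ) : Prop :=
  ∏ i, (n i + 1) ≤ s * (1 + ∑ i, n i) + ∑ i, a i * (n i + 1)

open PiTensorProduct

namespace Unbal

variable (K : Type*) [Field K] {k : ℕ} (n : Fin k → ℕ) (L : Fin k)

abbrev MIdx := ∀ i : {i : Fin k // i ≠ L}, Fin (n i.1 + 1)

/-- basis tensor -/
noncomputable def bc (c : ∀ i, Fin (n i + 1)) : ⨂[K] i, (Fin (n i + 1) → K) :=
  tprod K fun i => Pi.single (c i) (1 : K)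

/-- restricted product of coordinates -/
def wv (q : ∀ i, Fin (n i + 1) → K) : MIdx n L → K :=
  fun c => ∏ i, q i.1 (c i)

def mix (a : Fin (n L + 1)) (c' : MIdx n L) : ∀ i, Fin (n i + 1) :=
  (Equiv.piSplitAt L fun i => Fin (n i + 1)).symm (a, c')

@[simp] lemma mix_L (a : Fin (n L + 1)) (c' : MIdx n L) : mix n L a c' L = a := by
  simp [mix]

@[simp] lemma mix_ne (a : Fin (n L + 1)) (c' : MIdx n L) (i : Fin k) (h : i ≠ L) :
    mix n L a c' i = c' ⟨i, h⟩ := by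
  simp [mix, h]

lemma prod_split (g : Fin k → K) : ∏ i, g i = g L * ∏ i : {i : Fin k // i ≠ L}, g i.1 := by
  rw [← Finset.mul_prod_erase Finset.univ g (Finset.mem_univ L)]
  congr 1
  exact Finset.prod_subtype _ (by simp) _

lemma sum_mix {E : Type*} [AddCommMonoid E] (F : (∀ i, Fin (n i + 1)) → E) :
    ∑ c, F c = ∑ a : Fin (n L + 1), ∑ c' : MIdx n L, F (mix n L a c') := by
  rw [← ((Equiv.piSplitAt L fun i => Fin (n i + 1)).symm.sum_comp F), Fintype.sum_prod_type]
  rfl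

lemma tprod_eq_sum (x : ∀ i, Fin (n i + 1) → K) :
    (tprod K x : ⨂[K] i, (Fin (n i + 1) → K))
      = ∑ c : ∀ i, Fin (n i + 1), (∏ i, x i (c i)) • bc K n c := by
  have hx : x = fun i => ∑ a, x i a • (Pi.single a (1 : K) : Fin (n i + 1) → K) := by
    funext i b
    simp [Pi.single_apply]
  conv_lhs => rw [hx]
  rw [MultilinearMap.map_sum]
  refine Finset.sum_congr rfl fun c _ => ?_
  rw [MultilinearMap.map_smul_univ]
  rfl

lemma wv_update_L (q : ∀ i, Fin (n i + 1) → K) (y : Fin (n L + 1) → K) :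
    wv K n L (Function.update q L y) = wv K n L q := by
  funext c'
  unfold wv
  refine Finset.prod_congr rfl fun i _ => ?_
  rw [Function.update_of_ne i.2]

lemma prod_mix (x : ∀ i, Fin (n i + 1) → K) (b : Fin (n L + 1)) (c' : MIdx n L) :
    ∏ i, x i (mix n L b c' i) = x L b * wv K n L x c' := by
  rw [prod_split K L (g := fun i => x i (mix n L b c' i)), mix_L]
  congr 1
  unfold wv
  refine Finset.prod_congr rfl fun i _ => ?_
  rw [mix_ne n L b c' i.1 i.2]

lemma tprod_update_L (q : ∀ i, Fin (n i + 1) → K) (a : Fin (n L + 1)) :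
    (tprod K (Function.update q L (Pi.single a 1)) : ⨂[K] i, (Fin (n i + 1) → K))
      = ∑ c' : MIdx n L, wv K n L q c' • bc K n (mix n L a c') := by
  rw [tprod_eq_sum, sum_mix]
  have hterm : ∀ (b : Fin (n L + 1)) (c' : MIdx n L),
      (∏ i, Function.update q L (Pi.single a 1) i (mix n L b c' i))
        = (if b = a then (1:K) else 0) * wv K n L q c' := by
    intro b c'
    rw [prod_mix]
    congr 1
    · rw [Function.update_self, Pi.single_apply]
    · rw [wv_update_L]
  rw [Finset.sum_comm]
  refine Finset.sum_congr rfl fun c' _ => ?_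
  rw [Finset.sum_eq_single a]
  · rw [hterm a c', if_pos rfl, one_mul]
  · intro b _ hb
    rw [hterm b c', if_neg hb, zero_mul, zero_smul]
  · simp

/-- the linear map `y ↦ wv (update q i0 y)` -/
def wvUpd (q : ∀ i, Fin (n i + 1) → K) (i0 : {i : Fin k // i ≠ L}) :
    (Fin (n i0.1 + 1) → K) →ₗ[K] (MIdx n L → K) where
  toFun y := wv K n L (Function.update q i0.1 y)
  map_add' y z := by
    funext c'
    have h : ∀ u : Fin (n i0.1 + 1) → K, wv K n L (Function.update q i0.1 u) c'
        = u (c' i0) * ∏ i ∈ Finset.univ.erase i0, q i.1 (c' i) := by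
      intro u
      unfold wv
      rw [← Finset.mul_prod_erase Finset.univ _ (Finset.mem_univ i0)]
      congr 1
      · rw [Function.update_self]
      · refine Finset.prod_congr rfl fun i hi => ?_
        rw [Function.update_of_ne]
        exact fun hc => (Finset.mem_erase.1 hi).1 (Subtype.ext hc)
    simp [h, add_mul]
  map_smul' t y := by
    funext c'
    have h : ∀ u : Fin (n i0.1 + 1) → K, wv K n L (Function.update q i0.1 u) c'
        = u (c' i0) * ∏ i ∈ Finset.univ.erase i0, q i.1 (c' i) := by
      intro u
      unfold wv
      rw [← Finset.mul_prod_erase Finset.univ _ (Finset.mem_univ i0)]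
      congr 1
      · rw [Function.update_self]
      · refine Finset.prod_congr rfl fun i hi => ?_
        rw [Function.update_of_ne]
        exact fun hc => (Finset.mem_erase.1 hi).1 (Subtype.ext hc)
    simp [h, mul_assoc]

lemma wvUpd_apply (q : ∀ i, Fin (n i + 1) → K) (i0 : {i : Fin k // i ≠ L})
    (y : Fin (n i0.1 + 1) → K) :
    wvUpd K n L q i0 y = wv K n L (Function.update q i0.1 y) := rfl

/-- The linear map sending `h : MIdx → K` to `∑ c', h c' • bc (mix a c')`. -/
noncomputable def psi (a : Fin (n L + 1)) :
    (MIdx n L → K) →ₗ[K] (⨂[K] i, (Fin (n i + 1) → K)) where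
  toFun h := ∑ c', h c' • bc K n (mix n L a c')
  map_add' h g := by simp [add_smul, Finset.sum_add_distrib]
  map_smul' t h := by simp [Finset.smul_sum, mul_smul]

lemma psi_apply (a : Fin (n L + 1)) (h : MIdx n L → K) :
    psi K n L a h = ∑ c', h c' • bc K n (mix n L a c') := rfl

lemma psi_single (a : Fin (n L + 1)) (c' : MIdx n L) :
    psi K n L a (Pi.single c' 1) = bc K n (mix n L a c') := by
  rw [psi_apply]
  simp [Pi.single_apply]

lemma psi_wv (a : Fin (n L + 1)) (q : ∀ i, Fin (n i + 1) → K) :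
    psi K n L a (wv K n L q) = tprod K (Function.update q L (Pi.single a 1)) :=
  (tprod_update_L K n L q a).symm

theorem span_criterion {s : ℕ} (p : Fin s → ∀ i, Fin (n i + 1) → K)
    (H : ∀ a : Fin (n L + 1), (⊤ : Submodule K (MIdx n L → K)) ≤
      Submodule.span K (Set.range fun l => wv K n L (p l)) ⊔
        ⨆ l, ⨆ (_ : p l L = Pi.single a 1), ⨆ i0 : {i : Fin k // i ≠ L},
          LinearMap.range (wvUpd K n L (p l) i0)) :
    (⨆ l, segreTangent K n (p l)) = ⊤ := by
  rw [eq_top_iff, ← PiTensorProduct.span_tprod_eq_top, Submodule.span_le]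
  rintro t ⟨x, rfl⟩
  show (tprod K x : ⨂[K] i, (Fin (n i + 1) → K)) ∈ _
  rw [tprod_eq_sum]
  refine Submodule.sum_mem _ fun c _ => Submodule.smul_mem _ _ ?_
  -- reduce to basis tensors
  set a : Fin (n L + 1) := c L with ha
  set c0 : MIdx n L := fun i => c i.1 with hc0
  have hmixc : mix n L a c0 = c :=
    (Equiv.piSplitAt L fun i => Fin (n i + 1)).symm_apply_apply c
  have key : Submodule.map (psi K n L a)
      (Submodule.span K (Set.range fun l => wv K n L (p l)) ⊔
        ⨆ l, ⨆ (_ : p l L = Pi.single a 1), ⨆ i0 : {i : Fin k // i ≠ L},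
          LinearMap.range (wvUpd K n L (p l) i0))
      ≤ ⨆ l, segreTangent K n (p l) := by
    rw [Submodule.map_sup]
    refine sup_le ?_ ?_
    · rw [Submodule.map_span]
      rw [Submodule.span_le]
      rintro t ⟨t', ⟨l, rfl⟩, rfl⟩
      refine Submodule.mem_iSup_of_mem l ?_
      refine Submodule.mem_iSup_of_mem L ?_
      refine ⟨Pi.single a 1, ?_⟩
      rw [MultilinearMap.toLinearMap_apply]
      exact (psi_wv K n L a (p l)).symm
    · rw [Submodule.map_iSup]
      refine iSup_le fun l => ?_
      rw [Submodule.map_iSup]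
      refine iSup_le fun hpl => ?_
      rw [Submodule.map_iSup]
      refine iSup_le fun i0 => ?_
      rw [← LinearMap.range_comp]
      rintro t ⟨y, rfl⟩
      refine Submodule.mem_iSup_of_mem l ?_
      refine Submodule.mem_iSup_of_mem i0.1 ?_
      refine ⟨y, ?_⟩
      rw [MultilinearMap.toLinearMap_apply]
      show _ = psi K n L a (wvUpd K n L (p l) i0 y)
      rw [wvUpd_apply, psi_wv,
        Function.update_comm i0.2 y (Pi.single a 1) (p l), ← hpl, Function.update_eq_self]
  have h1 : Pi.single c0 (1 : K) ∈
      Submodule.span K (Set.range fun l => wv K n L (p l)) ⊔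
        ⨆ l, ⨆ (_ : p l L = Pi.single a 1), ⨆ i0 : {i : Fin k // i ≠ L},
          LinearMap.range (wvUpd K n L (p l) i0) := H a Submodule.mem_top
  have h2 := key (Submodule.mem_map_of_mem (f := psi K n L a) h1)
  rw [psi_single, hmixc] at h2
  exact h2

lemma prod_indicator {ι : Type*} [Fintype ι] {β : ι → Type*} [∀ i, DecidableEq (β i)]
    (d e : ∀ i, β i) :
    (∏ i, if e i = d i then (1 : K) else 0) = if e = d then 1 else 0 := by
  by_cases h : e = d
  · subst h; simp
  · rw [if_neg h]
    obtain ⟨i, hi⟩ := Function.ne_iff.1 h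
    exact Finset.prod_eq_zero (Finset.mem_univ i) (if_neg hi)

/-- the product-form functional -/
noncomputable def fg (φ : Fin (n L + 1) → K) (h : MIdx n L → K) :
    (⨂[K] i, (Fin (n i + 1) → K)) →ₗ[K] K :=
  PiTensorProduct.lift (∑ c : ∀ i, Fin (n i + 1),
    (φ (c L) * h (fun i => c i.1)) •
      ((MultilinearMap.mkPiAlgebra K (Fin k) K).compLinearMap
        (fun i => LinearMap.proj (c i))))

lemma fg_tprod (φ : Fin (n L + 1) → K) (h : MIdx n L → K) (x : ∀ i, Fin (n i + 1) → K) :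
    fg K n L φ h (tprod K x)
      = (∑ a, φ a * x L a) * (∑ c', h c' * wv K n L x c') := by
  rw [fg, PiTensorProduct.lift.tprod, MultilinearMap.sum_apply, Finset.sum_mul_sum]
  rw [sum_mix n L (F := fun c => ((φ (c L) * h (fun i => c i.1)) •
      ((MultilinearMap.mkPiAlgebra K (Fin k) K).compLinearMap
        (fun i => LinearMap.proj (c i)))) x)]
  refine Finset.sum_congr rfl fun a _ => Finset.sum_congr rfl fun c' _ => ?_
  rw [MultilinearMap.smul_apply, MultilinearMap.compLinearMap_apply,
    MultilinearMap.mkPiAlgebra_apply]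
  have h1 : (fun i : {i : Fin k // i ≠ L} => mix n L a c' i.1) = c' := by
    funext i
    rw [mix_ne n L a c' i.1 i.2]
  have h2 : ∀ i, (LinearMap.proj (mix n L a c' i) : (Fin (n i + 1) → K) →ₗ[K] K) (x i)
      = x i (mix n L a c' i) := fun i => rfl
  simp only [h2, prod_mix K n L x a c', mix_L, h1, smul_eq_mul]
  ring

lemma exists_ann {ι : Type*} [Fintype ι] [DecidableEq ι] {s : ℕ} (hs : s < Fintype.card ι)
    (v : Fin s → ι → K) : ∃ φ : ι → K, φ ≠ 0 ∧ ∀ l, ∑ a, φ a * v l a = 0 := by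
  set Θ : (ι → K) →ₗ[K] (Fin s → K) := (Matrix.of fun l a => v l a).mulVecLin with hΘ
  have hni : LinearMap.ker Θ ≠ ⊥ := by
    intro hker
    have hinj : Function.Injective Θ := LinearMap.ker_eq_bot.1 hker
    have := LinearMap.finrank_le_finrank_of_injective hinj
    rw [Module.finrank_fintype_fun_eq_card, Module.finrank_fintype_fun_eq_card] at this
    simp only [Fintype.card_fin] at this
    omega
  obtain ⟨φ, hφmem, hφne⟩ := Submodule.exists_mem_ne_zero_of_ne_bot hni
  refine ⟨φ, hφne, fun l => ?_⟩
  have := congrFun (LinearMap.mem_ker.1 hφmem) l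
  simp only [hΘ, Matrix.mulVecLin_apply, Matrix.mulVec, dotProduct, Matrix.of_apply,
    Pi.zero_apply] at this
  rw [← this]
  exact Finset.sum_congr rfl fun a _ => mul_comm _ _

theorem lower_bound {s : ℕ} (p : Fin s → ∀ i, Fin (n i + 1) → K)
    (hA : s < n L + 1) (hP : s < Fintype.card (MIdx n L)) :
    (⨆ l, segreTangent K n (p l)) ≠ ⊤ := by
  obtain ⟨φ, hφne, hφ⟩ := exists_ann K (by simpa using hA) (fun l => p l L)
  obtain ⟨h, hhne, hh⟩ := exists_ann K hP (fun l => wv K n L (p l))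
  intro htop
  have hker : (⨆ l, segreTangent K n (p l)) ≤ LinearMap.ker (fg K n L φ h) := by
    refine iSup_le fun l => iSup_le fun i0 => ?_
    rintro t ⟨y, rfl⟩
    rw [LinearMap.mem_ker, MultilinearMap.toLinearMap_apply, fg_tprod]
    by_cases hi0 : i0 = L
    · subst hi0
      rw [wv_update_L, hh l, mul_zero]
    · have : Function.update (p l) i0 y L = p l L := Function.update_of_ne (Ne.symm hi0) _ _
      rw [this, hφ l, zero_mul]
  rw [htop, top_le_iff] at hker
  have hfg0 : fg K n L φ h = 0 := LinearMap.ker_eq_top.1 hker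
  obtain ⟨a0, ha0⟩ := Function.ne_iff.1 hφne
  obtain ⟨c'0, hc'0⟩ := Function.ne_iff.1 hhne
  have hz := congrArg (fun F : _ →ₗ[K] K => F (PiTensorProduct.tprod K fun i => Pi.single (mix n L a0 c'0 i) (1:K))) hfg0
  simp only [LinearMap.zero_apply] at hz
  rw [fg_tprod] at hz
  have e1 : (∑ a, φ a * (Pi.single (mix n L a0 c'0 L) (1:K) : Fin (n L + 1) → K) a) = φ a0 := by
    rw [mix_L]
    simp [Pi.single_apply]
  have e2 : (∑ c', h c' * wv K n L (fun i => Pi.single (mix n L a0 c'0 i) (1:K)) c') = h c'0 := by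
    have hwv : ∀ c', wv K n L (fun i => Pi.single (mix n L a0 c'0 i) (1:K)) c'
        = if c' = c'0 then 1 else 0 := by
      intro c'
      unfold wv
      rw [← prod_indicator K c'0 c']
      refine Finset.prod_congr rfl fun i _ => ?_
      have hmm : mix n L a0 c'0 i.1 = c'0 i := mix_ne n L a0 c'0 i.1 i.2
      show (Pi.single (mix n L a0 c'0 i.1) (1:K) : Fin (n i.1 + 1) → K) (c' i)
        = if c' i = c'0 i then 1 else 0
      rw [hmm, Pi.single_apply]
    simp only [hwv, mul_ite, mul_one, mul_zero]
    simp
  rw [e1, e2] at hz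
  exact (mul_ne_zero ha0 hc'0) hz

lemma span_singles_top {ι : Type*} [Fintype ι] [DecidableEq ι] :
    Submodule.span K (Set.range fun c : ι => (Pi.single c 1 : ι → K)) = ⊤ := by
  have : (Set.range fun c : ι => (Pi.single c 1 : ι → K)) = Set.range (Pi.basisFun K ι) := by
    refine congrArg _ ?_
    funext c
    rw [Pi.basisFun_apply]
  rw [this]
  exact Module.Basis.span_eq (Pi.basisFun K ι)

theorem membership_case1 {s : ℕ} (e : MIdx n L ≃ Fin s) :
    ∃ p : Fin s → ∀ i, Fin (n i + 1) → K,
      (∀ l i, p l i ≠ 0) ∧ (⨆ l, segreTangent K n (p l)) = ⊤ := by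
  refine ⟨fun l i => if h : i = L then Pi.single 0 1 else Pi.single (e.symm l ⟨i, h⟩) 1,
    fun l i => ?_, ?_⟩
  · dsimp only
    by_cases h : i = L
    · rw [dif_pos h]
      intro hz
      have := congrFun hz 0
      rw [Pi.single_eq_same] at this
      exact one_ne_zero this
    · rw [dif_neg h]
      intro hz
      have := congrFun hz (e.symm l ⟨i, h⟩)
      rw [Pi.single_eq_same] at this
      exact one_ne_zero this
  · apply span_criterion
    intro a
    refine le_trans ?_ le_sup_left
    have hwv : ∀ l, wv K n L (fun i => if h : i = L then Pi.single 0 1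
        else Pi.single (e.symm l ⟨i, h⟩) 1) = Pi.single (e.symm l) 1 := by
      intro l
      funext c'
      unfold wv
      rw [Pi.single_apply, ← prod_indicator K (e.symm l) c']
      refine Finset.prod_congr rfl fun i _ => ?_
      dsimp only
      rw [dif_neg i.2, Pi.single_apply]
  -- needs the eta fix: Pi.single (e.symm l ⟨i.1, i.2⟩) 1 (c' i) vs c'0 i
    rw [← span_singles_top (K := K) (ι := MIdx n L), Submodule.span_le]
    rintro t ⟨c', rfl⟩
    refine Submodule.subset_span ⟨e c', ?_⟩
    exact (hwv (e c')).trans (by rw [Equiv.symm_apply_apply])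

lemma exists_common_nonvanishing [Infinite K] {σ : Type*} {T : Type*} [Fintype T]
    (f : T → MvPolynomial σ K) (hf : ∀ t, f t ≠ 0) :
    ∃ v : σ → K, ∀ t, MvPolynomial.eval v (f t) ≠ 0 := by
  have hprod : (∏ t, f t) ≠ 0 := Finset.prod_ne_zero_iff.2 fun t _ => hf t
  by_contra hcon
  push_neg at hcon
  apply hprod
  apply MvPolynomial.funext
  intro x
  obtain ⟨t, ht⟩ := hcon x
  rw [map_prod, map_zero]
  exact Finset.prod_eq_zero (Finset.mem_univ t) ht

lemma span_of_det_ne_zero {ι κ : Type*} [Fintype ι] [Fintype κ] [DecidableEq ι]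
    (A : Matrix ι κ K) (ισ : ι → κ) (hdet : (A.submatrix id ισ).det ≠ 0) :
    Submodule.span K (Set.range fun x : κ => (fun r => A r x : ι → K)) = ⊤ := by
  set B := A.submatrix id ισ with hB
  rw [eq_top_iff]
  intro y _
  have hx : B.mulVec (B⁻¹.mulVec y) = y := by
    rw [Matrix.mulVec_mulVec, Matrix.mul_nonsing_inv _ (Ne.isUnit hdet), Matrix.one_mulVec]
  set x := B⁻¹.mulVec y with hxdef
  have hy : y = ∑ j : ι, x j • (fun r => A r (ισ j) : ι → K) := by
    funext r
    rw [← hx]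
    simp only [Matrix.mulVec, dotProduct, Finset.sum_apply, Pi.smul_apply,
      smul_eq_mul, hB, Matrix.submatrix_apply, id_eq]
    exact Finset.sum_congr rfl fun j _ => mul_comm _ _
  rw [hy]
  exact Submodule.sum_mem _ fun j _ =>
    Submodule.smul_mem _ _ (Submodule.subset_span ⟨ισ j, rfl⟩)

lemma det_of_span {ι κ : Type*} [Fintype ι] [Fintype κ] [DecidableEq ι]
    (A : Matrix ι κ K)
    (hspan : Submodule.span K (Set.range fun x : κ => (fun r => A r x : ι → K)) = ⊤) :
    ∃ ισ : ι → κ, (A.submatrix id ισ).det ≠ 0 := by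
  classical
  obtain ⟨b, hbsub, hbspan, hbind⟩ :=
    exists_linearIndependent K (Set.range fun x : κ => (fun r => A r x : ι → K))
  rw [hspan] at hbspan
  have hbfin : b.Finite := hbind.setFinite
  have := hbfin.fintype
  have hbbasis : Module.Basis b K (ι → K) := Module.Basis.mk hbind (by rw [Subtype.range_coe, hbspan])
  have hcardb : Fintype.card b = Fintype.card ι := by
    rw [← Module.finrank_eq_card_basis hbbasis, Module.finrank_fintype_fun_eq_card]
  have eqb : ι ≃ b := (Fintype.equivOfCardEq hcardb).symm
  have hpre : ∀ y : b, ∃ x : κ, (fun r => A r x : ι → K) = y.1 := fun y => hbsub y.2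
  choose pre hpre2 using hpre
  refine ⟨fun r => pre (eqb r), fun hdet0 => ?_⟩
  obtain ⟨g, hgne, hg0⟩ := (Matrix.exists_mulVec_eq_zero_iff).2 hdet0
  have hsum : ∑ j, g j • ((eqb j : b) : ι → K) = 0 := by
    funext r
    have := congrFun hg0 r
    simp only [Matrix.mulVec, dotProduct, Matrix.submatrix_apply, id_eq,
      Pi.zero_apply] at this
    simp only [Finset.sum_apply, Pi.smul_apply, smul_eq_mul, Pi.zero_apply]
    rw [← this]
    refine Finset.sum_congr rfl fun j _ => ?_
    rw [← congrFun (hpre2 (eqb j)) r]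
    exact mul_comm _ _
  have hind2 : LinearIndependent K (fun j : ι => ((eqb j : b) : ι → K)) :=
    hbind.comp eqb eqb.injective
  exact hgne (funext fun j => Fintype.linearIndependent_iff.1 hind2 g hsum j)

attribute [local instance 10] Classical.propDecidable

lemma wv_update_apply (q : ∀ i, Fin (n i + 1) → K) (i0 : {i : Fin k // i ≠ L})
    (u : Fin (n i0.1 + 1) → K) (c' : MIdx n L) :
    wv K n L (Function.update q i0.1 u) c'
      = u (c' i0) * ∏ i ∈ Finset.univ.erase i0, q i.1 (c' i) := by
  unfold wv
  rw [← Finset.mul_prod_erase Finset.univ _ (Finset.mem_univ i0)]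
  congr 1
  · rw [Function.update_self]
  · refine Finset.prod_congr rfl fun i hi => ?_
    rw [Function.update_of_ne]
    exact fun hc => (Finset.mem_erase.1 hi).1 (Subtype.ext hc)

def IsBall (c' : MIdx n L) : Prop :=
  ∃ i0 : {i : Fin k // i ≠ L}, ∀ i, i ≠ i0 → c' i = 0

def ballPt (y : (i : {i : Fin k // i ≠ L}) × Fin (n i.1 + 1)) : MIdx n L :=
  Function.update (fun _ => 0) y.1 y.2

def gEmb :
    ({c' : MIdx n L // ¬ IsBall n L c'} ⊕
      (Unit ⊕ ((i : {i : Fin k // i ≠ L}) × Fin (n i.1)))) → MIdx n L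
  | .inl d => d.1
  | .inr (.inl _) => fun _ => 0
  | .inr (.inr y) => ballPt n L ⟨y.1, y.2.succ⟩

lemma card_compl_ball [Nonempty {i : Fin k // i ≠ L}] :
    Fintype.card {c' : MIdx n L // ¬ IsBall n L c'} + (1 + ∑ i : {i : Fin k // i ≠ L}, n i.1)
      ≤ Fintype.card (MIdx n L) := by
  have hzball : IsBall n L (fun _ => 0) := ⟨Classical.arbitrary _, fun _ _ => rfl⟩
  have hbball : ∀ y : (i : {i : Fin k // i ≠ L}) × Fin (n i.1),
      IsBall n L (ballPt n L ⟨y.1, y.2.succ⟩) :=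
    fun y => ⟨y.1, fun i' hi' => Function.update_of_ne hi' _ _⟩
  have hbne : ∀ y : (i : {i : Fin k // i ≠ L}) × Fin (n i.1),
      ballPt n L ⟨y.1, y.2.succ⟩ ≠ fun _ => 0 := by
    intro y h
    have := congrFun h y.1
    rw [ballPt, Function.update_self] at this
    exact Fin.succ_ne_zero y.2 this
  have hginj : Function.Injective (gEmb n L) := by
    rintro (d | (⟨⟩ | ⟨i, r⟩)) (d' | (⟨⟩ | ⟨i', r'⟩)) h
    · exact congrArg Sum.inl (Subtype.ext h)
    · have h' : d.1 = (fun _ => 0 : MIdx n L) := h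
      exact absurd (h' ▸ hzball) d.2
    · have h' : d.1 = ballPt n L ⟨i', r'.succ⟩ := h
      exact absurd (h' ▸ hbball ⟨i', r'⟩) d.2
    · have h' : (fun _ => 0 : MIdx n L) = d'.1 := h
      exact absurd (h'.symm ▸ hzball) d'.2
    · rfl
    · have h' : (fun _ => 0 : MIdx n L) = ballPt n L ⟨i', r'.succ⟩ := h
      exact absurd h'.symm (hbne ⟨i', r'⟩)
    · have h' : ballPt n L ⟨i, r.succ⟩ = d'.1 := h
      exact absurd (h' ▸ hbball ⟨i, r⟩) d'.2
    · have h' : ballPt n L ⟨i, r.succ⟩ = (fun _ => 0 : MIdx n L) := h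
      exact absurd h' (hbne ⟨i, r⟩)
    · have h' : ballPt n L ⟨i, r.succ⟩ = ballPt n L ⟨i', r'.succ⟩ := h
      by_cases hii : i = i'
      · subst hii
        have h2 := congrFun h' i
        rw [ballPt, ballPt, Function.update_self, Function.update_self] at h2
        rw [Fin.succ_inj.1 h2]
      · exfalso
        have h2 := congrFun h' i
        rw [ballPt, ballPt, Function.update_self, Function.update_of_ne hii] at h2
        exact Fin.succ_ne_zero r h2
  have hle := Fintype.card_le_of_injective _ hginj
  rw [Fintype.card_sum, Fintype.card_sum, Fintype.card_unit, Fintype.card_sigma] at hle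
  simpa using hle

abbrev PSig := Fin (n L + 1) × ((i : Fin k) × Fin (n i + 1))

abbrev ColIx := Fin (n L + 1) ⊕ ((i : {i : Fin k // i ≠ L}) × Fin (n i.1 + 1))

def uOf (v : PSig n L → K) (l : Fin (n L + 1)) : ∀ i, Fin (n i + 1) → K :=
  fun i r => v (l, ⟨i, r⟩)

noncomputable def GM (j : Fin (n L + 1)) :
    Matrix (MIdx n L) (ColIx n L) (MvPolynomial (PSig n L) K) :=
  fun c' x => match x with
  | .inl l => ∏ i : {i : Fin k // i ≠ L}, MvPolynomial.X (l, ⟨i.1, c' i⟩)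
  | .inr z => if c' z.1 = z.2 then
      ∏ i ∈ Finset.univ.erase z.1, MvPolynomial.X (j, ⟨i.1, c' i⟩) else 0

lemma eval_GM_inl (v : PSig n L → K) (j l : Fin (n L + 1)) (c' : MIdx n L) :
    MvPolynomial.eval v (GM K n L j c' (.inl l)) = wv K n L (uOf K n L v l) c' := by
  show MvPolynomial.eval v (∏ i : {i : Fin k // i ≠ L}, MvPolynomial.X (l, ⟨i.1, c' i⟩)) = _
  rw [map_prod]
  unfold wv
  exact Finset.prod_congr rfl fun i _ => MvPolynomial.eval_X _

lemma eval_GM_inr (v : PSig n L → K) (j : Fin (n L + 1))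
    (z : (i : {i : Fin k // i ≠ L}) × Fin (n i.1 + 1)) (c' : MIdx n L) :
    MvPolynomial.eval v (GM K n L j c' (.inr z))
      = wvUpd K n L (uOf K n L v j) z.1 (Pi.single z.2 1) c' := by
  rw [wvUpd_apply, wv_update_apply, Pi.single_apply]
  show MvPolynomial.eval v (if c' z.1 = z.2 then
      ∏ i ∈ Finset.univ.erase z.1, MvPolynomial.X (j, ⟨i.1, c' i⟩) else 0) = _
  rw [apply_ite (MvPolynomial.eval v), map_zero, map_prod, ite_mul, one_mul, zero_mul]
  by_cases hc : c' z.1 = z.2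
  · rw [if_pos hc, if_pos hc]
    exact Finset.prod_congr rfl fun i _ => MvPolynomial.eval_X _
  · rw [if_neg hc, if_neg hc]

/-- the witness parameter values -/
noncomputable def witF (embD : {c' : MIdx n L // ¬ IsBall n L c'} → Fin (n L + 1))
    (l : Fin (n L + 1)) : ∀ i : Fin k, Fin (n i + 1) → K :=
  fun i r => if hL : i = L then (if r = 0 then 1 else 0) else
    match Function.partialInv embD l with
    | some d => if r = d.1 ⟨i, hL⟩ then 1 else 0
    | none => if r = 0 then 1 else 0

lemma witF_j (embD : {c' : MIdx n L // ¬ IsBall n L c'} → Fin (n L + 1))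
    (j : Fin (n L + 1)) (hav : ∀ d, embD d ≠ j) (i : Fin k) (r : Fin (n i + 1)) :
    witF K n L embD j i r = if r = 0 then 1 else 0 := by
  unfold witF
  by_cases hL : i = L
  · rw [dif_pos hL]
  · rw [dif_neg hL]
    have hnone : Function.partialInv embD j = none := by
      unfold Function.partialInv
      rw [dif_neg]
      rintro ⟨d, hd⟩
      exact hav d hd
    rw [hnone]

lemma witF_d (embD : {c' : MIdx n L // ¬ IsBall n L c'} → Fin (n L + 1))
    (hinj : Function.Injective embD) (d : {c' : MIdx n L // ¬ IsBall n L c'})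
    (i : Fin k) (hL : ¬ i = L) (r : Fin (n i + 1)) :
    witF K n L embD (embD d) i r = if r = d.1 ⟨i, hL⟩ then 1 else 0 := by
  unfold witF
  rw [dif_neg hL, Function.partialInv_left hinj]

lemma witness_spans (j : Fin (n L + 1))
    (embD : {c' : MIdx n L // ¬ IsBall n L c'} → Fin (n L + 1))
    (hinj : Function.Injective embD) (hav : ∀ d, embD d ≠ j) :
    Submodule.span K (Set.range fun x : ColIx n L =>
      (fun c' => MvPolynomial.eval (fun s : PSig n L => witF K n L embD s.1 s.2.1 s.2.2)
        (GM K n L j c' x) : MIdx n L → K)) = ⊤ := by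
  set vW : PSig n L → K := fun s => witF K n L embD s.1 s.2.1 s.2.2 with hvW
  have huW : ∀ l, uOf K n L vW l = witF K n L embD l := fun l => rfl
  rw [eq_top_iff, ← span_singles_top (K := K) (ι := MIdx n L), Submodule.span_le]
  rintro t ⟨c'0, rfl⟩
  by_cases hball : IsBall n L c'0
  · obtain ⟨i0, h0⟩ := hball
    refine Submodule.subset_span ⟨.inr ⟨i0, c'0 i0⟩, ?_⟩
    funext c'
    show MvPolynomial.eval vW (GM K n L j c' (.inr ⟨i0, c'0 i0⟩))
      = (Pi.single c'0 1 : MIdx n L → K) c'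
    rw [eval_GM_inr, wvUpd_apply, wv_update_apply, huW, Pi.single_apply, Pi.single_apply]
    have hfac : ∀ i ∈ Finset.univ.erase i0,
        witF K n L embD j i.1 (c' i) = if c' i = 0 then 1 else 0 :=
      fun i _ => witF_j K n L embD j hav i.1 (c' i)
    rw [Finset.prod_congr rfl hfac]
    by_cases hc : c' = c'0
    · subst hc
      rw [if_pos rfl, if_pos rfl, Finset.prod_eq_one fun i hi =>
        if_pos (h0 i (Finset.mem_erase.1 hi).1), mul_one]
    · rw [if_neg hc]
      obtain ⟨iw, hiw⟩ := Function.ne_iff.1 hc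
      by_cases hio : iw = i0
      · subst hio
        rw [if_neg hiw, zero_mul]
      · have h00 : c'0 iw = 0 := h0 iw hio
        have hz : (if c' iw = 0 then (1:K) else 0) = 0 :=
          if_neg (fun hcc : c' iw = 0 => hiw (hcc.trans h00.symm))
        rw [Finset.prod_eq_zero (Finset.mem_erase.2 ⟨hio, Finset.mem_univ iw⟩) hz, mul_zero]
  · refine Submodule.subset_span ⟨.inl (embD ⟨c'0, hball⟩), ?_⟩
    funext c'
    show MvPolynomial.eval vW (GM K n L j c' (.inl (embD ⟨c'0, hball⟩)))
      = (Pi.single c'0 1 : MIdx n L → K) c'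
    rw [eval_GM_inl, huW, Pi.single_apply, ← prod_indicator K c'0 c']
    unfold wv
    refine Finset.prod_congr rfl fun i _ => ?_
    rw [witF_d K n L embD hinj ⟨c'0, hball⟩ i.1 i.2 (c' i)]

theorem membership_case2 [Infinite K] [Nonempty {i : Fin k // i ≠ L}]
    (hcard : Fintype.card (MIdx n L) + 1 ≤ n L + ∑ i : {i : Fin k // i ≠ L}, n i.1) :
    ∃ p : Fin (n L + 1) → ∀ i, Fin (n i + 1) → K,
      (∀ l i, p l i ≠ 0) ∧ (⨆ l, segreTangent K n (p l)) = ⊤ := by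
  classical
  have hDle : ∀ j : Fin (n L + 1), ∃ embD : {c' : MIdx n L // ¬ IsBall n L c'} → Fin (n L + 1),
      Function.Injective embD ∧ ∀ d, embD d ≠ j := by
    intro j
    have h1 := card_compl_ball n L
    have h3 : Fintype.card {l : Fin (n L + 1) // ¬ (l = j)} = n L := by
      rw [Fintype.card_subtype_compl, Fintype.card_subtype_eq, Fintype.card_fin]
      omega
    have h2 : Fintype.card {c' : MIdx n L // ¬ IsBall n L c'}
        ≤ Fintype.card {l : Fin (n L + 1) // ¬ (l = j)} := by
      rw [h3]; omega
    obtain ⟨f⟩ := Function.Embedding.nonempty_of_card_le h2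
    exact ⟨fun d => (f d).1, fun d d' h => f.injective (Subtype.ext h), fun d => (f d).2⟩
  choose embD hembInj hembAv using hDle
  have hdj : ∀ j : Fin (n L + 1), ∃ ισ : MIdx n L → ColIx n L,
      ((GM K n L j).submatrix id ισ).det ≠ 0 := by
    intro j
    obtain ⟨ισ, hισ⟩ := det_of_span K
      ((GM K n L j).map (MvPolynomial.eval
        (fun s : PSig n L => witF K n L (embD j) s.1 s.2.1 s.2.2)))
      (witness_spans K n L j (embD j) (hembInj j) (hembAv j))
    refine ⟨ισ, fun h0 => hισ ?_⟩
    show ((MvPolynomial.eval fun s : PSig n L => witF K n L (embD j) s.1 s.2.1 s.2.2).mapMatrix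
      ((GM K n L j).submatrix id ισ)).det = 0
    rw [← RingHom.map_det, h0, map_zero]
  choose ισ hισ using hdj
  obtain ⟨v, hv⟩ := exists_common_nonvanishing K
    (f := Sum.elim (fun j : Fin (n L + 1) => ((GM K n L j).submatrix id (ισ j)).det)
      (fun s : PSig n L => MvPolynomial.X s))
    (by rintro (j | s); exacts [hισ j, MvPolynomial.X_ne_zero s])
  refine ⟨fun l => Function.update (uOf K n L v l) L (Pi.single l 1), fun l i => ?_, ?_⟩
  · show Function.update (uOf K n L v l) L (Pi.single l 1) i ≠ 0
    by_cases hL : i = L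
    · subst hL
      rw [Function.update_self]
      intro h0
      have := congrFun h0 l
      rw [Pi.single_eq_same] at this
      exact one_ne_zero this
    · rw [Function.update_of_ne hL]
      intro h0
      have h00 := congrFun h0 0
      have hx := hv (.inr (l, ⟨i, 0⟩))
      rw [Sum.elim_inr, MvPolynomial.eval_X] at hx
      exact hx h00
  · apply span_criterion
    intro a
    have hde : MvPolynomial.eval v (((GM K n L a).submatrix id (ισ a)).det) ≠ 0 := by
      have := hv (.inl a); rwa [Sum.elim_inl] at this
    have hde2 : ((((GM K n L a).map (MvPolynomial.eval v)).submatrix id (ισ a))).det ≠ 0 := by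
      intro h0
      apply hde
      rw [RingHom.map_det]
      exact h0
    have hspan := span_of_det_ne_zero K ((GM K n L a).map (MvPolynomial.eval v)) (ισ a) hde2
    rw [← hspan, Submodule.span_le]
    rintro t ⟨x, rfl⟩
    cases x with
    | inl l =>
      apply Submodule.mem_sup_left
      refine Submodule.subset_span ⟨l, ?_⟩
      show wv K n L (Function.update (uOf K n L v l) L (Pi.single l 1)) = _
      rw [wv_update_L]
      funext c'
      exact (eval_GM_inl K n L v a l c').symm
    | inr z =>
      apply Submodule.mem_sup_right
      refine Submodule.mem_iSup_of_mem a ?_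
      refine Submodule.mem_iSup_of_mem (Function.update_self _ _ _) ?_
      refine Submodule.mem_iSup_of_mem z.1 ?_
      refine ⟨Pi.single z.2 1, ?_⟩
      show wvUpd K n L (Function.update (uOf K n L v a) L (Pi.single a 1)) z.1 (Pi.single z.2 1)
        = _
      funext c'
      rw [wvUpd_apply, Function.update_comm (Ne.symm z.1.2), wv_update_L]
      exact (eval_GM_inr K n L v a z c').symm

theorem lower_bound' {s : ℕ} (p : Fin s → ∀ i, Fin (n i + 1) → K)
    (hA : s < n L + 1) (hP : s < Fintype.card (MIdx n L))
    (htop : (⨆ l, segreTangent K n (p l)) = ⊤) : False :=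
  lower_bound K n L p hA hP htop

end Unbal

theorem unbalanced_typical_rank_aux
    (K : Type*) [Field K] [CharZero K] {k : ℕ} (hk : 3 ≤ k)
    (n : Fin k → ℕ) (hmono : Monotone n) (hpos : ∀ i, 1 ≤ n i)
    (hunbal : ∏ i ∈ Finset.univ.filter (fun i : Fin k => (i : ℕ) + 1 < k), (n i + 1) + 1
        ≤ n ⟨k - 1, Nat.sub_one_lt (by omega)⟩
          + ∑ i ∈ Finset.univ.filter (fun i : Fin k => (i : ℕ) + 1 < k), n i) :
    IsLeast {s : ℕ | ∃ p : Fin s → ∀ i, Fin (n i + 1) → K,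
        (∀ j i, p j i ≠ 0) ∧
        (⨆ j, segreTangent K n (p j)) = (⊤ : Submodule K (⨂[K] i, (Fin (n i + 1) → K)))}
      (min (n ⟨k - 1, Nat.sub_one_lt (by omega)⟩ + 1)
        (∏ i ∈ Finset.univ.filter (fun i : Fin k => (i : ℕ) + 1 < k), (n i + 1))) := by
  classical
  set L : Fin k := ⟨k - 1, by omega⟩ with hL
  have hfilt : ∀ x : Fin k, x ∈ Finset.univ.filter (fun i : Fin k => (i : ℕ) + 1 < k)
      ↔ x ≠ L := by
    intro x
    have hx := x.2
    rw [Finset.mem_filter]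
    constructor
    · rintro ⟨-, h⟩ rfl
      have hKL : (L : ℕ) = k - 1 := rfl
      omega
    · intro h
      refine ⟨Finset.mem_univ x, ?_⟩
      rcases lt_or_ge ((x : ℕ) + 1) k with h1 | h1
      · exact h1
      · exfalso
        apply h
        have hx2 := x.2
        exact Fin.ext (by show (x : ℕ) = (L : ℕ); have : (L : ℕ) = k - 1 := rfl; omega)
  have hprod : ∏ i ∈ Finset.univ.filter (fun i : Fin k => (i : ℕ) + 1 < k), (n i + 1)
      = ∏ i : {i : Fin k // i ≠ L}, (n i.1 + 1) :=
    Finset.prod_subtype _ hfilt _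
  have hsum : ∑ i ∈ Finset.univ.filter (fun i : Fin k => (i : ℕ) + 1 < k), n i
      = ∑ i : {i : Fin k // i ≠ L}, n i.1 :=
    Finset.sum_subtype _ hfilt _
  have hcardM : Fintype.card (Unbal.MIdx n L) = ∏ i : {i : Fin k // i ≠ L}, (n i.1 + 1) := by
    rw [Fintype.card_pi]
    exact Finset.prod_congr rfl fun i _ => Fintype.card_fin _
  have hNE : Nonempty {i : Fin k // i ≠ L} := by
    refine ⟨⟨⟨0, by omega⟩, ?_⟩⟩
    intro h
    rw [hL, Fin.ext_iff] at h
    simp at h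
    omega
  constructor
  · rcases le_total (n L + 1)
        (∏ i ∈ Finset.univ.filter (fun i : Fin k => (i : ℕ) + 1 < k), (n i + 1)) with h | h
    · rw [min_eq_left h]
      have hcard : Fintype.card (Unbal.MIdx n L) + 1
          ≤ n L + ∑ i : {i : Fin k // i ≠ L}, n i.1 := by
        rw [hcardM, ← hprod, ← hsum]
        exact hunbal
      exact Unbal.membership_case2 K n L hcard
    · rw [min_eq_right h]
      have e : Unbal.MIdx n L ≃
          Fin (∏ i ∈ Finset.univ.filter (fun i : Fin k => (i : ℕ) + 1 < k), (n i + 1)) :=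
        Fintype.equivFinOfCardEq (hcardM.trans hprod.symm)
      exact Unbal.membership_case1 K n L e
  · intro s hs
    by_contra hlt
    push_neg at hlt
    obtain ⟨p, hnz, htop⟩ := hs
    refine Unbal.lower_bound' K n L p ?_ ?_ htop
    · omega
    · rw [hcardM, ← hprod]
      omega


/-- Let `1 ≤ n₁ ≤ ⋯ ≤ n_k` be unbalanced, i.e.
`Π_{i<k-1}(nᵢ+1) + 1 ≤ n_k + Σ_{i<k-1} nᵢ`.  Then the typical tensor rank — the least
`s` for which there exist `s` points `p₁,…,p_s` (pure tensors of nonzero vectors) whose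
tangent spaces span the whole tensor space — equals
`min (n_k + 1) (Π_{i<k-1}(nᵢ+1))`. -/
theorem unbalanced_typical_rank
    (K : Type*) [Field K] [CharZero K] {k : ℕ} (hk : 3 ≤ k)
    (n : Fin k → ℕ) (hmono : Monotone n) (hpos : ∀ i, 1 ≤ n i)
    (hunbal : ∏ i ∈ Finset.univ.filter (fun i : Fin k => (i : ℕ) + 1 < k), (n i + 1) + 1
        ≤ n ⟨k - 1, by omega⟩
          + ∑ i ∈ Finset.univ.filter (fun i : Fin k => (i : ℕ) + 1 < k), n i) :
    IsLeast {s : ℕ | ∃ p : Fin s → ∀ i, Fin (n i + 1) → K,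
        (∀ j i, p j i ≠ 0) ∧
        (⨆ j, segreTangent K n (p j)) = (⊤ : Submodule K (⨂[K] i, (Fin (n i + 1) → K)))}
      (min (n ⟨k - 1, by omega⟩ + 1)
        (∏ i ∈ Finset.univ.filter (fun i : Fin k => (i : ℕ) + 1 < k), (n i + 1))) :=
  unbalanced_typical_rank_aux K hk n hmono hpos hunbal
end

section
/- Let n be an odd positive integer and k ≥ 1. Then the Segre variety P^k × (Pⁿ)^{k+1} is perfect: the tuple (k, n, …, n; (n+1)^k; 0,…,0) (with k+1 copies of n) is equiabundant, since (n+1)^k · (1 + k + (k+1)n) = (k+1)(n+1)^{k+1}, and T(k, n, …, n; (n+1)^k; 0,…,0) holds; that is, there exist (n+1)^k points p₁,…,p_{(n+1)^k} (pure tensors of nonzero vectors in K^{k+1} ⊗ (K^{n+1})^{⊗(k+1)}) such that Σ_j T_{p_j} = K^{k+1} ⊗ (K^{n+1})^{⊗(k+1)}, a space of dimension (k+1)(n+1)^{k+1}. -/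
open scoped TensorProduct

open PiTensorProduct

namespace SegreAux

variable (K : Type*) [Field K] [CharZero K] {k n : ℕ}

abbrev NN (k n : ℕ) : Fin (k + 2) → ℕ := Fin.cons k (fun _ : Fin (k + 1) => n)

def zv (c : Fin (k + 1) → Fin (n + 1)) : ℕ := finFunctionFinEquiv c

theorem zv_injective : Function.Injective (zv (k := k) (n := n)) :=
  fun _ _ h => finFunctionFinEquiv.injective (Fin.val_injective h)

noncomputable def U (c : Fin (k + 1) → Fin (n + 1)) : Fin (k + 1) → K :=
  fun m => ((zv c : ℕ) : K) ^ (m : ℕ)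

noncomputable def P (c : Fin (k + 1) → Fin (n + 1)) :
    ∀ i : Fin (k + 2), Fin (NN k n i + 1) → K :=
  Fin.cons (U K c) (fun j => Pi.single (c j) 1)

/-- the supremum of tangent spaces over all codewords -/
noncomputable def S : Submodule K (⨂[K] i, (Fin (NN k n i + 1) → K)) :=
  ⨆ c : Fin (k + 1) → Fin (n + 1), ⨆ _ : ∑ j, c j = 0, segreTangent K (NN k n) (P K c)

/-- the neighbour codeword of a word `a`, in direction `i` -/
def nbr (a : Fin (k + 1) → Fin (n + 1)) (i : Fin (k + 1)) : Fin (k + 1) → Fin (n + 1) :=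
  fun j => a j + if j = i then -(∑ t, a t) else 0

theorem nbr_self (a : Fin (k + 1) → Fin (n + 1)) (i : Fin (k + 1)) :
    nbr a i i = a i - ∑ t, a t := by simp [nbr, sub_eq_add_neg]

theorem nbr_ne (a : Fin (k + 1) → Fin (n + 1)) {i j : Fin (k + 1)} (h : j ≠ i) :
    nbr a i j = a j := by simp [nbr, h]

theorem nbr_sum (a : Fin (k + 1) → Fin (n + 1)) (i : Fin (k + 1)) :
    ∑ j, nbr a i j = 0 := by
  unfold nbr
  rw [Finset.sum_add_distrib]
  simp

theorem nbr_injective (a : Fin (k + 1) → Fin (n + 1)) (hs : ∑ t, a t ≠ 0) :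
    Function.Injective (nbr a) := by
  intro i i' h
  by_contra hne
  have h1 := congrFun h i
  rw [nbr_self, nbr_ne a hne] at h1
  exact hs (sub_eq_self.mp h1)


theorem exists_decomp (a : Fin (k + 1) → Fin (n + 1)) (hs : ∑ t, a t ≠ 0) (m : Fin (k + 1)) :
    ∃ d : Fin (k + 1) → K, Pi.single m (1 : K) = ∑ i, d i • U K (nbr a i) := by
  set z : Fin (k + 1) → K := fun i => ((zv (nbr a i) : ℕ) : K) with hz
  have hzinj : Function.Injective z := by
    intro i i' h
    exact nbr_injective a hs (zv_injective (Nat.cast_injective h))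
  set M := Matrix.vandermonde z with hM
  have hdet : IsUnit M.det := by
    rw [hM]
    exact (Matrix.det_vandermonde_ne_zero_iff.mpr hzinj).isUnit
  have h2 : ∀ d : Fin (k + 1) → K, Matrix.vecMul d M = ∑ i, d i • U K (nbr a i) := by
    intro d
    funext j
    simp [Matrix.vecMul, dotProduct, hM, Matrix.vandermonde, Finset.sum_apply, U, hz]
  refine ⟨Matrix.vecMul (Pi.single m 1) M⁻¹, ?_⟩
  have h1 : Matrix.vecMul (Matrix.vecMul (Pi.single m 1) M⁻¹) M = Pi.single m 1 := by
    rw [Matrix.vecMul_vecMul, Matrix.nonsing_inv_mul _ hdet, Matrix.vecMul_one]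
  rw [← h2, h1]

theorem basis_mem (f : ∀ i : Fin (k + 2), Fin (NN k n i + 1)) :
    tprod K (fun i => (Pi.single (f i) 1 : Fin (NN k n i + 1) → K)) ∈ S K (k := k) (n := n) := by
  set m : Fin (k + 1) := f 0 with hm
  set a : Fin (k + 1) → Fin (n + 1) := fun j => f j.succ with ha
  have hf : (fun i => (Pi.single (f i) 1 : Fin (NN k n i + 1) → K))
      = (Fin.cons (Pi.single m 1) (fun j => Pi.single (a j) 1) :
          ∀ i, Fin (NN k n i + 1) → K) := by
    funext i
    refine Fin.cases ?_ ?_ i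
    · rfl
    · intro j
      exact (Fin.cons_succ (α := fun i => Fin (NN k n i + 1) → K)
        (Pi.single m 1) (fun j => Pi.single (a j) 1) j).symm
  rw [hf]
  by_cases hs : ∑ t, a t = 0
  · have h1 : tprod K (Fin.cons (Pi.single m 1) (fun j => Pi.single (a j) 1) :
        ∀ i, Fin (NN k n i + 1) → K) ∈ segreG K (NN k n) (P K a) 0 := by
      refine LinearMap.mem_range.mpr ⟨Pi.single m 1, ?_⟩
      show tprod K (Function.update (P K a) 0 (Pi.single m 1)) = _
      rw [show (P K a) = (Fin.cons (U K a) (fun j => Pi.single (a j) 1) :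
        ∀ i, Fin (NN k n i + 1) → K) from rfl, Fin.update_cons_zero]
    exact (show segreTangent K (NN k n) (P K a) ≤ S K from
      le_iSup_of_le a (le_iSup (fun _ => segreTangent K (NN k n) (P K a)) hs))
      ((le_iSup (fun t => segreG K (NN k n) (P K a) t) 0) h1)
  · obtain ⟨d, hd⟩ := exists_decomp K a hs m
    set L := (tprod K (s := fun i => Fin (NN k n i + 1) → K)).toLinearMap
        (Fin.cons 0 (fun j => Pi.single (a j) 1)) 0 with hL
    have hLx : ∀ x : Fin (k + 1) → K,
        L x = tprod K (Fin.cons x (fun j => Pi.single (a j) 1) :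
          ∀ i, Fin (NN k n i + 1) → K) := by
      intro x
      show tprod K (Function.update (Fin.cons (0 : Fin (k + 1) → K)
        (fun j => Pi.single (a j) 1) : ∀ i, Fin (NN k n i + 1) → K) 0 x) = _
      exact congrArg (PiTensorProduct.tprod K) (Fin.update_cons_zero (α := fun i => Fin (NN k n i + 1) → K) _ _ _)
    have hmem : ∀ i : Fin (k + 1), L (U K (nbr a i)) ∈ S K (k := k) (n := n) := by
      intro i
      have h1 : L (U K (nbr a i)) ∈ segreG K (NN k n) (P K (nbr a i)) i.succ := by
        refine LinearMap.mem_range.mpr ⟨Pi.single (a i) 1, ?_⟩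
        show tprod K (Function.update (P K (nbr a i)) i.succ (Pi.single (a i) 1)) = _
        have harg : Function.update (P K (nbr a i)) i.succ (Pi.single (a i) 1)
            = (Fin.cons (U K (nbr a i)) (fun j => Pi.single (a j) 1) :
                ∀ i', Fin (NN k n i' + 1) → K) := by
          rw [show (P K (nbr a i)) = Fin.cons (U K (nbr a i))
              (fun j => Pi.single ((nbr a i) j) 1) from rfl]
          refine (Fin.cons_update (α := fun i => Fin (NN k n i + 1) → K) _ _ _ _).symm.trans ?_
          refine congrArg (fun t : ∀ _ : Fin (k + 1), Fin (n + 1) → K =>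
            (Fin.cons (U K (nbr a i)) t : ∀ i', Fin (NN k n i' + 1) → K)) ?_
          funext j
          rcases eq_or_ne j i with rfl | hji
          · exact Function.update_self _ _ _
          · rw [← nbr_ne a hji]; exact Function.update_of_ne hji _ _
        rw [harg]; exact (hLx _).symm
      exact (show segreTangent K (NN k n) (P K (nbr a i)) ≤ S K from le_iSup_of_le (nbr a i)
          (le_iSup (fun _ => segreTangent K (NN k n) (P K (nbr a i))) (nbr_sum a i)))
        ((le_iSup (fun t => segreG K (NN k n) (P K (nbr a i)) t) i.succ) h1)
    have heq : tprod K (Fin.cons (Pi.single m 1) (fun j => Pi.single (a j) 1) :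
            ∀ i, Fin (NN k n i + 1) → K)
        = ∑ i, d i • L (U K (nbr a i)) := by
      refine (hLx _).symm.trans ?_; refine (congrArg L hd).trans ?_; refine (map_sum L (fun i => (d i • U K (nbr a i) : Fin (NN k n 0 + 1) → K)) Finset.univ).trans ?_; exact Finset.sum_congr rfl fun i _ => map_smul L _ _
    rw [heq]
    exact Submodule.sum_mem _ fun i _ => Submodule.smul_mem _ _ (hmem i)

def code (t : Fin k → Fin (n + 1)) : Fin (k + 1) → Fin (n + 1) :=
  Fin.snoc t (-(∑ i, t i))

theorem code_init {c : Fin (k + 1) → Fin (n + 1)} (hc : ∑ j, c j = 0) :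
    code (Fin.init c) = c := by
  have h3 : -(∑ i : Fin k, Fin.init c i) = c (Fin.last k) := by
    refine neg_eq_of_add_eq_zero_right ?_
    rw [show (∑ i : Fin k, Fin.init c i) = ∑ i : Fin k, c i.castSucc from rfl,
      ← Fin.sum_univ_castSucc]
    exact hc
  unfold code
  rw [h3]
  exact Fin.snoc_init_self c

theorem S_eq_top : S K (k := k) (n := n) = ⊤ := by
  rw [eq_top_iff, ← PiTensorProduct.span_tprod_eq_top, Submodule.span_le]
  rintro x ⟨v, rfl⟩
  have hv : v = fun i => ∑ j, v i j • (Pi.single j 1 : Fin (NN k n i + 1) → K) := by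
    funext i t
    simp [Finset.sum_apply, Pi.single_apply]
  rw [hv, MultilinearMap.map_sum]
  refine Submodule.sum_mem _ fun r _ => ?_
  rw [MultilinearMap.map_smul_univ]
  exact Submodule.smul_mem _ _ (basis_mem K r)

end SegreAux

theorem pi_single_ne_zero {ι : Type*} [DecidableEq ι] {M : ι → Type*} [∀ i, Zero (M i)]
    (i : ι) {x : M i} (hx : x ≠ 0) : Pi.single i x ≠ 0 := fun h => hx (by
  have := congrFun h i
  rwa [Pi.single_eq_same, Pi.zero_apply] at this)

open SegreAux

/-- Let `n` be an odd positive integer and `k ≥ 1`.  Then the Segre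
variety `P^k × (Pⁿ)^{k+1}` is perfect: the tuple `(k, n, …, n; (n+1)^k; 0,…,0)` is
equiabundant, and there exist `(n+1)^k` points whose tangent spaces span the whole
tensor space `K^{k+1} ⊗ (K^{n+1})^{⊗(k+1)}`, of dimension `(k+1)(n+1)^{k+1}`. -/
theorem Pk_times_Pn_pow_perfect
    (K : Type*) [Field K] [CharZero K] (k n : ℕ) (hk : 1 ≤ k)
    (hodd : Odd n) (hpos : 1 ≤ n) :
    ((n + 1) ^ k * (1 + ∑ i, (Fin.cons k (fun _ : Fin (k + 1) => n) : Fin (k + 2) → ℕ) i)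
        = ∏ i, ((Fin.cons k (fun _ : Fin (k + 1) => n) : Fin (k + 2) → ℕ) i + 1)) ∧
    (∏ i, ((Fin.cons k (fun _ : Fin (k + 1) => n) : Fin (k + 2) → ℕ) i + 1)
        = (k + 1) * (n + 1) ^ (k + 1)) ∧
    ∃ p : Fin ((n + 1) ^ k) →
        ∀ i, Fin ((Fin.cons k (fun _ : Fin (k + 1) => n) : Fin (k + 2) → ℕ) i + 1) → K,
      (∀ j i, p j i ≠ 0) ∧
      (⨆ j, segreTangent K (Fin.cons k (fun _ : Fin (k + 1) => n)) (p j))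
        = (⊤ : Submodule K (⨂[K] i,
            (Fin ((Fin.cons k (fun _ : Fin (k + 1) => n) : Fin (k + 2) → ℕ) i + 1) → K))) := by
  have hsum : (∑ i, (Fin.cons k (fun _ : Fin (k + 1) => n) : Fin (k + 2) → ℕ) i)
      = k + (k + 1) * n := by
    rw [Fin.sum_cons, Finset.sum_const, Finset.card_univ, Fintype.card_fin, smul_eq_mul]
  have hprod : (∏ i, ((Fin.cons k (fun _ : Fin (k + 1) => n) : Fin (k + 2) → ℕ) i + 1))
      = (k + 1) * (n + 1) ^ (k + 1) := by
    rw [Fin.prod_univ_succ]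
    simp [Finset.prod_const]
  refine ⟨by rw [hsum, hprod, pow_succ]; ring, hprod, ?_⟩
  refine ⟨fun j => P K (code (finFunctionFinEquiv.symm j)), ?_, ?_⟩
  · intro j i
    refine Fin.cases ?_ ?_ i
    · intro h
      have h0 := congrFun h 0
      simp [P, U] at h0
    · intro j' h
      exact pi_single_ne_zero (M := fun _ : Fin (n + 1) => K)
        (code (finFunctionFinEquiv.symm j) j') one_ne_zero h
  · refine le_antisymm le_top ?_
    rw [← S_eq_top K (k := k) (n := n)]
    refine iSup_le fun c => iSup_le fun hc => ?_
    refine le_iSup_of_le (finFunctionFinEquiv (Fin.init c)) ?_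
    simp only [Equiv.symm_apply_apply, code_init hc]
    exact le_rfl
end
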